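/- arXiv:1909.12498 — 4 statements merged into one kernel-verified Lean document; each statement's English description precedes it below -/
import Mathlib

section
/- The maximum over unit vectors η ∈ ℝ^d of 2μ ∫₀ᵗ |⟨η, ξ(s)⟩| ds equals 2μ (∑_{j=1}^d (t^j/j!)²)^{1/2}, for any μ > 0 and t > 0. -/
theorem integrator_reach_set_diameter (d : ℕ) (hd : 1 ≤ d) (μ t : ℝ) (hμ : 0 < μ) (ht : 0 < t) :
    IsGreatest
      {x : ℝ | ∃ η : EuclideanSpace ℝ (Fin d), ‖η‖ = 1 ∧
        x = 2 * μ * ∫ s in (0:ℝ)..t,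
          |∑ i : Fin d, η i * (s ^ (d - 1 - (i : ℕ)) / Nat.factorial (d - 1 - (i : ℕ)))|}
      (2 * μ * Real.sqrt (∑ j ∈ Finset.Icc 1 d, (t ^ j / Nat.factorial j) ^ 2)) := by
  classical
  set Q : ℝ := ∑ j ∈ Finset.Icc 1 d, (t ^ j / Nat.factorial j) ^ 2 with hQdef
  have hQpos : 0 < Q := by
    apply Finset.sum_pos'
    · intro j hj; positivity
    · exact ⟨1, Finset.mem_Icc.mpr ⟨le_refl 1, hd⟩, by positivity⟩
  set S : ℝ := Real.sqrt Q with hSdef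
  have hSpos : 0 < S := Real.sqrt_pos.mpr hQpos
  have hS2 : S ^ 2 = Q := Real.sq_sqrt hQpos.le
  -- reindexing lemma
  have key : ∀ f : ℕ → ℝ,
      ∑ i : Fin d, f (d - 1 - (i : ℕ) + 1) = ∑ j ∈ Finset.Icc 1 d, f j := by
    intro f
    rw [Fin.sum_univ_eq_sum_range (fun i => f (d - 1 - i + 1)) d]
    rw [show (Finset.Icc 1 d) = Finset.Ico 1 (d + 1) from (Finset.Ico_add_one_right_eq_Icc 1 d).symm]
    rw [Finset.sum_Ico_eq_sum_range]
    simp only [Nat.add_sub_cancel]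
    have h1 : ∑ i ∈ Finset.range d, f (1 + i) = ∑ i ∈ Finset.range d, f (i + 1) := by
      simp [Nat.add_comm]
    rw [h1]
    exact Finset.sum_range_reflect (fun j => f (j + 1)) d
  -- integral of monomial
  have hint : ∀ k : ℕ,
      (∫ s in (0:ℝ)..t, s ^ k / (Nat.factorial k : ℝ)) = t ^ (k + 1) / (Nat.factorial (k + 1) : ℝ) := by
    intro k
    rw [intervalIntegral.integral_div, integral_pow]
    have h : ((Nat.factorial (k + 1) : ℝ)) = ((k : ℝ) + 1) * (Nat.factorial k : ℝ) := by
      push_cast [Nat.factorial_succ]; ring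
    rw [h]
    have hk : ((k : ℝ) + 1) ≠ 0 := by positivity
    have hf : (Nat.factorial k : ℝ) ≠ 0 := by positivity
    field_simp
    simp
  set v : Fin d → ℝ := fun i =>
    t ^ (d - 1 - (i : ℕ) + 1) / (Nat.factorial (d - 1 - (i : ℕ) + 1) : ℝ) with hvdef
  have hvpos : ∀ i, 0 < v i := fun i => by positivity
  have hvsum : ∑ i : Fin d, (v i) ^ 2 = Q := key fun j => (t ^ j / (Nat.factorial j : ℝ)) ^ 2
  -- integrability of any such sum
  have hcont : ∀ c : Fin d → ℝ, Continuous fun s : ℝ =>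
      ∑ i : Fin d, c i * (s ^ (d - 1 - (i : ℕ)) / (Nat.factorial (d - 1 - (i : ℕ)) : ℝ)) := by
    intro c
    exact continuous_finset_sum _ fun i _ =>
      continuous_const.mul ((continuous_pow _).div_const _)
  have hintg : ∀ c : Fin d → ℝ,
      (∫ s in (0:ℝ)..t,
        ∑ i : Fin d, c i * (s ^ (d - 1 - (i : ℕ)) / (Nat.factorial (d - 1 - (i : ℕ)) : ℝ)))
        = ∑ i : Fin d, c i * v i := by
    intro c
    rw [intervalIntegral.integral_finset_sum
      (f := fun i s => c i * (s ^ (d - 1 - (i : ℕ)) / (Nat.factorial (d - 1 - (i : ℕ)) : ℝ))) (fun i _ =>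
      (continuous_const.mul ((continuous_pow _).div_const _)).intervalIntegrable 0 t)]
    exact Finset.sum_congr rfl fun i _ => by
      rw [intervalIntegral.integral_const_mul, hint]
  constructor
  · -- membership : η = v / S
    refine ⟨(WithLp.toLp 2 (fun i => v i / S) : EuclideanSpace ℝ (Fin d)), ?_, ?_⟩
    · rw [EuclideanSpace.norm_eq]
      simp only [PiLp.toLp_apply]
      have : ∑ i : Fin d, ‖v i / S‖ ^ 2 = 1 := by
        simp only [Real.norm_eq_abs, sq_abs, div_pow, ← Finset.sum_div, hvsum, hS2]
        field_simp
      rw [this, Real.sqrt_one]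
    · simp only [PiLp.toLp_apply]
      have habs : Set.EqOn
          (fun s : ℝ => |∑ i : Fin d, (v i / S) * (s ^ (d - 1 - (i : ℕ)) / (Nat.factorial (d - 1 - (i : ℕ)) : ℝ))|)
          (fun s : ℝ => ∑ i : Fin d, (v i / S) * (s ^ (d - 1 - (i : ℕ)) / (Nat.factorial (d - 1 - (i : ℕ)) : ℝ)))
          (Set.uIcc 0 t) := by
        intro s hs
        rw [Set.uIcc_of_le ht.le] at hs
        have hs0 : 0 ≤ s := hs.1
        refine abs_of_nonneg (Finset.sum_nonneg fun i _ => ?_)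
        have := (hvpos i).le
        positivity
      rw [intervalIntegral.integral_congr habs, hintg]
      have : ∑ i : Fin d, v i / S * v i = S := by
        have h1 : ∑ i : Fin d, v i / S * v i = (∑ i : Fin d, (v i) ^ 2) / S := by
          rw [Finset.sum_div]
          exact Finset.sum_congr rfl fun i _ => by ring
        rw [h1, hvsum, ← hS2]
        field_simp
      rw [this]
  · -- upper bound
    rintro x ⟨η, hη, rfl⟩
    have hη2 : ∑ i : Fin d, (η i) ^ 2 = 1 := by
      have h1 := congrArg (· ^ 2) (EuclideanSpace.norm_eq η ▸ hη)
      simp only [one_pow] at h1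
      rw [Real.sq_sqrt (Finset.sum_nonneg fun i _ => sq_nonneg _)] at h1
      simpa [Real.norm_eq_abs, sq_abs] using h1
    have hI : (∫ s in (0:ℝ)..t,
        |∑ i : Fin d, η i * (s ^ (d - 1 - (i : ℕ)) / (Nat.factorial (d - 1 - (i : ℕ)) : ℝ))|)
        ≤ ∑ i : Fin d, |η i| * v i := by
      have hmono : (∫ s in (0:ℝ)..t,
          |∑ i : Fin d, η i * (s ^ (d - 1 - (i : ℕ)) / (Nat.factorial (d - 1 - (i : ℕ)) : ℝ))|)
          ≤ ∫ s in (0:ℝ)..t,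
          ∑ i : Fin d, |η i| * (s ^ (d - 1 - (i : ℕ)) / (Nat.factorial (d - 1 - (i : ℕ)) : ℝ)) := by
        apply intervalIntegral.integral_mono_on ht.le
        · exact ((hcont η).abs).intervalIntegrable 0 t
        · exact (hcont fun i => |η i|).intervalIntegrable 0 t
        · intro s hs
          refine (Finset.abs_sum_le_sum_abs _ _).trans ?_
          refine Finset.sum_le_sum fun i _ => ?_
          rw [abs_mul]
          have hs0 : 0 ≤ s := hs.1
          have h2 : |s ^ (d - 1 - (i : ℕ)) / (Nat.factorial (d - 1 - (i : ℕ)) : ℝ)|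
              = s ^ (d - 1 - (i : ℕ)) / (Nat.factorial (d - 1 - (i : ℕ)) : ℝ) := by
            apply abs_of_nonneg; positivity
          rw [h2]
      calc _ ≤ _ := hmono
        _ = ∑ i : Fin d, |η i| * v i := hintg fun i => |η i|
    have hCS : ∑ i : Fin d, |η i| * v i ≤ S := by
      have h1 : (∑ i : Fin d, |η i| * v i) ^ 2 ≤
          (∑ i : Fin d, |η i| ^ 2) * ∑ i : Fin d, (v i) ^ 2 :=
        Finset.sum_mul_sq_le_sq_mul_sq _ _ _
      rw [hvsum] at h1
      have h2 : ∑ i : Fin d, |η i| ^ 2 = 1 := by simpa [sq_abs] using hη2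
      rw [h2, one_mul, ← hS2] at h1
      have h3 : 0 ≤ ∑ i : Fin d, |η i| * v i :=
        Finset.sum_nonneg fun i _ => mul_nonneg (abs_nonneg _) (hvpos i).le
      nlinarith [hSpos]
    have := hI.trans hCS
    have h2μ : (0:ℝ) ≤ 2 * μ := by positivity
    calc 2 * μ * _ ≤ 2 * μ * S := by nlinarith
      _ = 2 * μ * S := rfl
end

section
/- For the double integrator (d = 2), the diameter of the reach set at time t > 0 from a singleton initial condition with control bound μ > 0, given by max_{‖η‖₂=1} 2μ ∫₀ᵗ |η₁ s + η₂| ds, equals μ t √(t² + 4). -/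
-- upper bound algebra
lemma absB {a b t : ℝ} (h : a^2 + b^2 = 1) :
    |b| + |a*t+b| ≤ Real.sqrt (t^2+4) := by
  rw [show Real.sqrt (t^2+4) = Real.sqrt ((t^2+4)) from rfl]
  rw [Real.le_sqrt (by positivity)]
  have hm : |b| * |a*t+b| = |b*(a*t+b)| := (abs_mul _ _).symm
  rcases abs_cases (b*(a*t+b)) with ⟨he, _⟩ | ⟨he, _⟩ <;>
    nlinarith [sq_abs b, sq_abs (a*t+b), sq_nonneg (t*b - 2*a), sq_nonneg a, sq_nonneg (t*b+2*a)]
  positivity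

lemma intA (a b t : ℝ) (ht : 0 < t) :
    (∫ s in (0:ℝ)..t, |a*s+b|) ≤ t/2 * (|b| + |a*t+b|) := by
  have hint1 : IntervalIntegrable (fun s => |a*s+b|) MeasureTheory.volume 0 t :=
    (Continuous.abs (by continuity)).intervalIntegrable _ _
  have hint2 : IntervalIntegrable (fun s => |b| + s * ((|a*t+b| - |b|)/t)) MeasureTheory.volume 0 t :=
    (by continuity : Continuous fun s : ℝ => |b| + s * ((|a*t+b| - |b|)/t)).intervalIntegrable _ _
  have key : ∀ s ∈ Set.Icc (0:ℝ) t, |a*s+b| ≤ |b| + s * ((|a*t+b| - |b|)/t) := by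
    intro s hs
    obtain ⟨hs0, hst⟩ := hs
    have h1 : 0 ≤ s/t := by positivity
    have h2 : s/t ≤ 1 := (div_le_one ht).mpr hst
    have heq : a*s+b = (1-s/t)*b + (s/t)*(a*t+b) := by field_simp; ring
    calc |a*s+b| = |(1-s/t)*b + (s/t)*(a*t+b)| := by rw [heq]
      _ ≤ |(1-s/t)*b| + |(s/t)*(a*t+b)| := abs_add_le _ _
      _ = (1-s/t)*|b| + (s/t)*|a*t+b| := by
            rw [abs_mul, abs_mul, abs_of_nonneg (by linarith), abs_of_nonneg h1]
      _ = |b| + s * ((|a*t+b| - |b|)/t) := by field_simp; ring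
  calc (∫ s in (0:ℝ)..t, |a*s+b|)
      ≤ ∫ s in (0:ℝ)..t, (|b| + s * ((|a*t+b| - |b|)/t)) :=
        intervalIntegral.integral_mono_on ht.le hint1 hint2 key
    _ = t/2 * (|b| + |a*t+b|) := by
        rw [intervalIntegral.integral_add (intervalIntegrable_const)
          ((intervalIntegral.intervalIntegrable_id).mul_const _),
          intervalIntegral.integral_const, intervalIntegral.integral_mul_const,
          integral_id]
        field_simp
        ring

theorem double_integrator_diameter (μ t : ℝ) (hμ : 0 < μ) (ht : 0 < t) :
    IsGreatest
      {x : ℝ | ∃ η : EuclideanSpace ℝ (Fin 2), ‖η‖ = 1 ∧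
        x = 2 * μ * ∫ s in (0:ℝ)..t, |η 0 * s + η 1|}
      (μ * t * Real.sqrt (t ^ 2 + 4)) := by
  have h4 : (0:ℝ) ≤ t^2+4 := by positivity
  set r := Real.sqrt (t^2+4) with hrdef
  have hr : 0 < r := Real.sqrt_pos.mpr (by positivity)
  have hr2 : r^2 = t^2+4 := Real.sq_sqrt h4
  constructor
  · refine ⟨(WithLp.toLp 2 ![t/r, 2/r] : EuclideanSpace ℝ (Fin 2)), ?_, ?_⟩
    · rw [EuclideanSpace.norm_eq]
      rw [Fin.sum_univ_two]
      simp only [PiLp.toLp_apply, Matrix.cons_val_zero, Matrix.cons_val_one, Matrix.head_cons]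
      rw [show ‖t/r‖^2 + ‖2/r‖^2 = (t^2+4)/r^2 by
        rw [Real.norm_eq_abs, Real.norm_eq_abs, sq_abs, sq_abs]; field_simp; ring]
      rw [hr2, div_self (by positivity), Real.sqrt_one]
    · simp only [PiLp.toLp_apply, Matrix.cons_val_zero, Matrix.cons_val_one, Matrix.head_cons]
      have hcongr : (∫ s in (0:ℝ)..t, |t/r * s + 2/r|) = ∫ s in (0:ℝ)..t, (t/r * s + 2/r) := by
        apply intervalIntegral.integral_congr
        intro s hs
        rw [Set.uIcc_of_le ht.le] at hs
        have : 0 ≤ t/r * s + 2/r := by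
          have := hs.1
          positivity
        exact abs_of_nonneg this
      rw [hcongr]
      rw [intervalIntegral.integral_add ((intervalIntegral.intervalIntegrable_id.const_mul _))
        intervalIntegrable_const, intervalIntegral.integral_const_mul, integral_id,
        intervalIntegral.integral_const]
      have hrr : r * r = t^2 + 4 := by nlinarith
      have hr0 : r ≠ 0 := hr.ne'
      simp only [smul_eq_mul]
      field_simp
      linear_combination t * hrr
  · rintro x ⟨η, hη, rfl⟩
    have hab : (η 0)^2 + (η 1)^2 = 1 := by
      have := hη
      rw [EuclideanSpace.norm_eq, Fin.sum_univ_two] at this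
      have h2 : ‖η 0‖^2 + ‖η 1‖^2 = 1 := by
        nlinarith [Real.sq_sqrt (by positivity : (0:ℝ) ≤ ‖η 0‖^2 + ‖η 1‖^2), this]
      simpa [Real.norm_eq_abs, sq_abs] using h2
    have h1 := intA (η 0) (η 1) t ht
    have h2 := absB (t := t) hab
    calc 2 * μ * ∫ s in (0:ℝ)..t, |η 0 * s + η 1|
        ≤ 2 * μ * (t/2 * (|η 1| + |η 0 * t + η 1|)) := by
          apply mul_le_mul_of_nonneg_left h1 (by positivity)
      _ ≤ 2 * μ * (t/2 * r) := by
          apply mul_le_mul_of_nonneg_left _ (by positivity)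
          apply mul_le_mul_of_nonneg_left h2 (by positivity)
      _ = μ * t * r := by ring
end

section
/- For the triple integrator (d = 3), the diameter max_{‖η‖₂=1} 2μ ∫₀ᵗ |η₁ s²/2 + η₂ s + η₃| ds equals (μt/3) √(t⁴ + 9t² + 36), for μ, t > 0. -/
open intervalIntegral MeasureTheory

lemma quad_integral (a b c t : ℝ) :
    ∫ s in (0:ℝ)..t, (a * (s ^ 2 / 2) + b * s + c) = a * (t ^ 3 / 6) + b * (t ^ 2 / 2) + c * t := by
  have h1 : IntervalIntegrable (fun s : ℝ => a * (s ^ 2 / 2)) volume 0 t :=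
    (by continuity : Continuous fun s : ℝ => a * (s ^ 2 / 2)).intervalIntegrable 0 t
  have h2 : IntervalIntegrable (fun s : ℝ => b * s) volume 0 t :=
    (by continuity : Continuous fun s : ℝ => b * s).intervalIntegrable 0 t
  have h3 : IntervalIntegrable (fun s : ℝ => (c:ℝ)) volume 0 t :=
    (continuous_const).intervalIntegrable 0 t
  rw [integral_add (h1.add h2) h3, integral_add h1 h2]
  have e1 : (fun s : ℝ => a * (s ^ 2 / 2)) = fun s : ℝ => (a / 2) * s ^ 2 := by funext s; ring
  rw [e1, intervalIntegral.integral_const_mul, integral_pow, intervalIntegral.integral_const_mul, integral_id,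
    intervalIntegral.integral_const]
  simp only [smul_eq_mul]; push_cast
  ring

lemma msq_aux (t m1 m2 m3 : ℝ) (b1 : |m1| ≤ t ^ 3 / 6) (b2 : |m2| ≤ t ^ 2 / 2)
    (b3 : |m3| ≤ t) : m1 ^ 2 + m2 ^ 2 + m3 ^ 2 ≤ (t ^ 3 / 6) ^ 2 + (t ^ 2 / 2) ^ 2 + t ^ 2 := by
  have h1 := sq_le_sq' (neg_le_of_abs_le b1) (le_of_abs_le b1)
  have h2 := sq_le_sq' (neg_le_of_abs_le b2) (le_of_abs_le b2)
  have h3 := sq_le_sq' (neg_le_of_abs_le b3) (le_of_abs_le b3)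
  linarith
lemma cs_aux (a b c m1 m2 m3 N : ℝ) (habc : a ^ 2 + b ^ 2 + c ^ 2 = 1) (hN : 0 < N)
    (hm : m1 ^ 2 + m2 ^ 2 + m3 ^ 2 ≤ N ^ 2) : a * m1 + b * m2 + c * m3 ≤ N := by
  nlinarith [sq_nonneg (a * m2 - b * m1), sq_nonneg (a * m3 - c * m1),
    sq_nonneg (b * m3 - c * m2), sq_nonneg (a * m1 + b * m2 + c * m3 - N),
    sq_nonneg (a * m1 + b * m2 + c * m3 + N)]

theorem triple_integrator_diameter (μ t : ℝ) (hμ : 0 < μ) (ht : 0 < t) :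
    IsGreatest
      {x : ℝ | ∃ η : EuclideanSpace ℝ (Fin 3), ‖η‖ = 1 ∧
        x = 2 * μ * ∫ s in (0:ℝ)..t, |η 0 * (s ^ 2 / 2) + η 1 * s + η 2|}
      ((μ * t / 3) * Real.sqrt (t ^ 4 + 9 * t ^ 2 + 36)) := by
  set Y : ℝ := t ^ 4 + 9 * t ^ 2 + 36 with hY
  have hYpos : 0 < Y := by positivity
  set N : ℝ := t / 6 * Real.sqrt Y with hN
  have hNpos : 0 < N := by positivity
  have hN2 : N ^ 2 = (t ^ 3 / 6) ^ 2 + (t ^ 2 / 2) ^ 2 + t ^ 2 := by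
    have : Real.sqrt Y ^ 2 = Y := Real.sq_sqrt hYpos.le
    rw [hN, mul_pow, this]; ring
  constructor
  · -- membership
    refine ⟨(WithLp.equiv 2 (Fin 3 → ℝ)).symm ![t ^ 3 / 6 / N, t ^ 2 / 2 / N, t / N], ?_, ?_⟩
    · rw [EuclideanSpace.norm_eq]
      simp only [WithLp.equiv_symm_apply, PiLp.toLp_apply, WithLp.ofLp_toLp, Fin.sum_univ_three, Matrix.cons_val_zero,
        Matrix.cons_val_one, Matrix.head_cons, Matrix.cons_val_two, Matrix.tail_cons,
        Real.norm_eq_abs, sq_abs]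
      have e2 : (t ^ 3 / 6 / N) ^ 2 + (t ^ 2 / 2 / N) ^ 2 + (t / N) ^ 2
          = ((t ^ 3 / 6) ^ 2 + (t ^ 2 / 2) ^ 2 + t ^ 2) / N ^ 2 := by ring
      have : (t ^ 3 / 6 / N) ^ 2 + (t ^ 2 / 2 / N) ^ 2 + (t / N) ^ 2 = 1 := by
        rw [e2, ← hN2, div_self (by positivity)]
      rw [this, Real.sqrt_one]
    · simp only [WithLp.equiv_symm_apply, PiLp.toLp_apply, WithLp.ofLp_toLp, Matrix.cons_val_zero, Matrix.cons_val_one,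
        Matrix.head_cons, Matrix.cons_val_two, Matrix.tail_cons]
      have habs : ∀ s ∈ Set.uIcc (0:ℝ) t,
          |t ^ 3 / 6 / N * (s ^ 2 / 2) + t ^ 2 / 2 / N * s + t / N|
            = t ^ 3 / 6 / N * (s ^ 2 / 2) + t ^ 2 / 2 / N * s + t / N := by
        intro s hs
        rw [Set.uIcc_of_le ht.le] at hs
        have hs0 : 0 ≤ s := hs.1
        have : 0 ≤ t ^ 3 / 6 / N * (s ^ 2 / 2) + t ^ 2 / 2 / N * s + t / N := by positivity
        exact abs_of_nonneg this
      rw [intervalIntegral.integral_congr habs, quad_integral]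
      have e3 : t ^ 3 / 6 / N * (t ^ 3 / 6) + t ^ 2 / 2 / N * (t ^ 2 / 2) + t / N * t
          = ((t ^ 3 / 6) ^ 2 + (t ^ 2 / 2) ^ 2 + t ^ 2) / N := by ring
      have : t ^ 3 / 6 / N * (t ^ 3 / 6) + t ^ 2 / 2 / N * (t ^ 2 / 2) + t / N * t = N := by
        rw [e3, ← hN2, sq, mul_div_assoc, div_self hNpos.ne', mul_one]
      rw [this, hN]
      ring
  · -- upper bound
    rintro x ⟨η, hη, rfl⟩
    clear_value N Y
    set a : ℝ := η 0
    set b : ℝ := η 1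
    set c : ℝ := η 2
    have habc : a ^ 2 + b ^ 2 + c ^ 2 = 1 := by
      have := hη
      rw [EuclideanSpace.norm_eq] at this
      simp only [Fin.sum_univ_three, Real.norm_eq_abs, sq_abs] at this
      nlinarith [Real.sq_sqrt (by positivity : (0:ℝ) ≤ a ^ 2 + b ^ 2 + c ^ 2), this]
    set p : ℝ → ℝ := fun s => a * (s ^ 2 / 2) + b * s + c with hp
    have hpc : Continuous p := by fun_prop
    set σ : ℝ → ℝ := fun s => if p s < 0 then -1 else 1 with hσ
    have hσm : Measurable σ :=
      Measurable.ite (measurableSet_lt hpc.measurable measurable_const)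
        measurable_const measurable_const
    have hσ1 : ∀ s, |σ s| = 1 := by
      intro s; rw [hσ]; dsimp only; split <;> simp
    have hσp : ∀ s, σ s * p s = |p s| := by
      intro s; rw [hσ]; dsimp only; split
      · rw [abs_of_neg (by assumption)]; ring
      · rw [abs_of_nonneg (not_lt.1 (by assumption))]; ring
    have hint : ∀ g : ℝ → ℝ, Continuous g →
        IntervalIntegrable (fun s => σ s * g s) volume 0 t := by
      intro g hg
      refine IntervalIntegrable.mono_fun ((hg.abs).intervalIntegrable 0 t)
        ((hσm.mul hg.measurable).aestronglyMeasurable) ?_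
      filter_upwards with s
      simp only [Real.norm_eq_abs, abs_mul, hσ1, one_mul, abs_abs, le_refl]
    set m1 : ℝ := ∫ s in (0:ℝ)..t, σ s * (s ^ 2 / 2) with hm1
    set m2 : ℝ := ∫ s in (0:ℝ)..t, σ s * s with hm2
    set m3 : ℝ := ∫ s in (0:ℝ)..t, σ s with hm3
    have i1 := hint _ (by fun_prop : Continuous fun s : ℝ => s ^ 2 / 2)
    have i2 := hint _ (by fun_prop : Continuous fun s : ℝ => s)
    have i3 := hint _ (continuous_const : Continuous fun _ : ℝ => (1:ℝ))
    simp only [mul_one] at i3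
    -- ∫ |p| = a*m1 + b*m2 + c*m3
    have key : (∫ s in (0:ℝ)..t, |p s|) = a * m1 + b * m2 + c * m3 := by
      have e : ∀ s : ℝ, |p s| = a * (σ s * (s ^ 2 / 2)) + b * (σ s * s) + c * σ s := by
        intro s
        rw [← hσp s, hp]
        dsimp only
        ring
      rw [intervalIntegral.integral_congr (fun s _ => e s)]
      rw [integral_add ((i1.const_mul a).add (i2.const_mul b)) (i3.const_mul c),
        integral_add (i1.const_mul a) (i2.const_mul b),
        intervalIntegral.integral_const_mul, intervalIntegral.integral_const_mul, intervalIntegral.integral_const_mul]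
    -- bounds on m
    have hbound : ∀ g : ℝ → ℝ, Continuous g → (∀ s ∈ Set.Icc (0:ℝ) t, 0 ≤ g s) →
        |∫ s in (0:ℝ)..t, σ s * g s| ≤ ∫ s in (0:ℝ)..t, g s := by
      intro g hg hg0
      refine le_trans (intervalIntegral.abs_integral_le_integral_abs ht.le) (le_of_eq ?_)
      refine intervalIntegral.integral_congr fun s hs => ?_
      rw [Set.uIcc_of_le ht.le] at hs
      rw [abs_mul, hσ1, one_mul, abs_of_nonneg (hg0 s hs)]
    have b1 : |m1| ≤ t ^ 3 / 6 := by
      have := hbound _ (by fun_prop : Continuous fun s : ℝ => s ^ 2 / 2)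
        (fun s hs => by positivity)
      have e : (∫ s in (0:ℝ)..t, s ^ 2 / 2) = t ^ 3 / 6 := by
        have := quad_integral 1 0 0 t; simpa using this
      rw [e] at this; exact this
    have b2 : |m2| ≤ t ^ 2 / 2 := by
      have := hbound _ (by fun_prop : Continuous fun s : ℝ => s) (fun s hs => hs.1)
      have e : (∫ s in (0:ℝ)..t, s) = t ^ 2 / 2 := by
        have := quad_integral 0 1 0 t; simp at this; simpa using this
      rw [e] at this; exact this
    have b3 : |m3| ≤ t := by
      have := hbound _ (continuous_const : Continuous fun _ : ℝ => (1:ℝ))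
        (fun s _ => zero_le_one)
      simp only [mul_one] at this
      have e : (∫ s in (0:ℝ)..t, (1:ℝ)) = t := by simp
      rw [e] at this; exact this
    clear_value m1 m2 m3
    clear_value a b c
    -- Cauchy-Schwarz
    have hm_sq : m1 ^ 2 + m2 ^ 2 + m3 ^ 2 ≤ N ^ 2 := by
      rw [hN2]; exact msq_aux t m1 m2 m3 b1 b2 b3
    have hcs : a * m1 + b * m2 + c * m3 ≤ N :=
      cs_aux a b c m1 m2 m3 N habc hNpos hm_sq
    have hfin : (∫ s in (0:ℝ)..t, |p s|) ≤ N := key ▸ hcs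
    calc 2 * μ * ∫ s in (0:ℝ)..t, |a * (s ^ 2 / 2) + b * s + c|
        ≤ 2 * μ * N := by
          refine mul_le_mul_of_nonneg_left ?_ (by linarith)
          exact hfin
      _ = μ * t / 3 * Real.sqrt Y := by rw [hN]; ring
end

section
/- For the double integrator (d = 2) with μ, t > 0, the width of the reach set from a point in direction (cos θ, sin θ), given by w(θ) = 2μ ∫₀ᵗ |s cos θ + sin θ| ds, is a continuous function of θ that attains its maximum μ t √(t² + 4) exactly at θ = arctan(2/t) and θ = π + arctan(2/t) in [0, 2π). -/
open Real MeasureTheory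

lemma di_abs_lin_int (a b c d : ℝ) (hab : a ≤ b) (h1 : 0 ≤ a * c + d) (h2 : 0 ≤ b * c + d) :
    ∫ s in a..b, |s * c + d| = c * (b ^ 2 - a ^ 2) / 2 + d * (b - a) := by
  have heq : Set.EqOn (fun s => |s * c + d|) (fun s => s * c + d) (Set.uIcc a b) := by
    intro s hs
    rw [Set.uIcc_of_le hab] at hs
    rcases le_or_gt 0 c with hc | hc
    · exact abs_of_nonneg (by nlinarith [mul_nonneg (sub_nonneg.2 hs.1) hc])
    · exact abs_of_nonneg (by nlinarith [mul_nonneg (sub_nonneg.2 hs.2) (neg_nonneg.2 hc.le)])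
  rw [intervalIntegral.integral_congr heq]
  have hf : IntervalIntegrable (fun x : ℝ => x * c) volume a b :=
    (continuous_id.mul continuous_const).intervalIntegrable a b
  rw [intervalIntegral.integral_add (f := fun x => x * c) (g := fun _ => d) hf
      intervalIntegrable_const]
  rw [intervalIntegral.integral_mul_const, integral_id,
      intervalIntegral.integral_const, smul_eq_mul]
  ring

lemma di_abs_lin_int_neg (a b c d : ℝ) (hab : a ≤ b) (h1 : a * c + d ≤ 0) (h2 : b * c + d ≤ 0) :
    ∫ s in a..b, |s * c + d| = -(c * (b ^ 2 - a ^ 2) / 2 + d * (b - a)) := by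
  have heq : Set.EqOn (fun s => |s * c + d|) (fun s => |s * (-c) + (-d)|) (Set.uIcc a b) := by
    intro s _
    show |s * c + d| = |s * (-c) + (-d)|
    rw [show s * (-c) + (-d) = -(s * c + d) by ring, abs_neg]
  rw [intervalIntegral.integral_congr heq,
    di_abs_lin_int a b (-c) (-d) hab (by linarith) (by linarith)]
  ring

set_option maxHeartbeats 1000000 in
lemma di_key (t : ℝ) (ht : 0 < t) (c b : ℝ) (hcb : c ^ 2 + b ^ 2 = 1) :
    (∫ s in (0:ℝ)..t, |s * c + b|) ≤ t * Real.sqrt (t ^ 2 + 4) / 2 ∧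
    ((∫ s in (0:ℝ)..t, |s * c + b|) = t * Real.sqrt (t ^ 2 + 4) / 2 ↔ 2 * c = b * t) := by
  obtain ⟨K, hKdef⟩ : ∃ x : ℝ, x = Real.sqrt (t ^ 2 + 4) := ⟨_, rfl⟩
  rw [← hKdef]
  have hK0 : 0 < K := hKdef ▸ Real.sqrt_pos.mpr (by positivity)
  have hK2 : K ^ 2 = t ^ 2 + 4 := hKdef ▸ Real.sq_sqrt (by positivity)
  have hKt : t < K := by nlinarith
  have hc1 : c ^ 2 ≤ 1 := by nlinarith [sq_nonneg b]
  have habs : Continuous fun s : ℝ => |s * c + b| :=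
    ((continuous_id.mul continuous_const).add continuous_const).abs
  rcases le_or_gt 0 b with hb | hb
  · rcases le_or_gt 0 (c * t + b) with hctb | hctb
    · -- constant sign nonneg
      have hI : (∫ s in (0:ℝ)..t, |s * c + b|) = c * t ^ 2 / 2 + b * t := by
        rw [di_abs_lin_int 0 t c b ht.le (by simpa using hb) (by rw [mul_comm]; exact hctb)]
        ring
      have hX : 0 ≤ c * t ^ 2 / 2 + b * t := by
        nlinarith [mul_nonneg ht.le hctb, mul_nonneg ht.le hb]
      have e1 : t ^ 2 * (2 * c - b * t) ^ 2 / 4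
          = (t * K / 2) ^ 2 - (c * t ^ 2 / 2 + b * t) ^ 2 := by
        linear_combination (t ^ 2 * (t ^ 2 + 4) / 4) * hcb - (t ^ 2 / 4) * hK2
      have hsq : (c * t ^ 2 / 2 + b * t) ^ 2 ≤ (t * K / 2) ^ 2 := by
        nlinarith [e1, sq_nonneg (t * (2 * c - b * t))]
      have hle : c * t ^ 2 / 2 + b * t ≤ t * K / 2 := by
        nlinarith [hsq, hX, mul_pos ht hK0]
      refine ⟨by rw [hI]; exact hle, ?_, ?_⟩
      · intro h
        rw [hI] at h
        have h3 : t ^ 2 * (2 * c - b * t) ^ 2 = 0 := by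
          have : t ^ 2 * (2 * c - b * t) ^ 2 / 4 = 0 := by rw [e1, h]; ring
          linarith
        rcases mul_eq_zero.mp h3 with h4 | h4
        · exact absurd h4 (by positivity)
        · have := pow_eq_zero_iff (n := 2) (by norm_num) |>.mp h4
          linarith
      · intro h
        have h1 : (b * K) ^ 2 = 2 ^ 2 := by
          linear_combination b ^ 2 * hK2 - (2 * c + b * t) * h + 4 * hcb
        have h2 : (b * K - 2) * (b * K + 2) = 0 := by linear_combination h1
        have hbK : b * K = 2 := by
          rcases mul_eq_zero.mp h2 with h4 | h4
          · linarith
          · nlinarith [mul_nonneg hb hK0.le]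
        rw [hI]
        linear_combination (t ^ 2 / 4) * h + (t * K / 4) * hbK - (b * t / 4) * hK2
    · -- mixed: b ≥ 0, c*t + b < 0, so c < 0
      have hcneg : c < 0 := by nlinarith
      obtain ⟨s0, hs0def⟩ : ∃ x : ℝ, x = b / (-c) := ⟨_, rfl⟩
      have hs0 : 0 ≤ s0 := by rw [hs0def]; exact div_nonneg hb (by linarith)
      have hs0t : s0 ≤ t := by
        rw [hs0def, div_le_iff₀ (by linarith : (0:ℝ) < -c)]; nlinarith
      have hzero : s0 * c + b = 0 := by
        rw [hs0def, div_neg, neg_mul, div_mul_cancel₀ b (ne_of_lt hcneg)]; ring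
      have hI : (∫ s in (0:ℝ)..t, |s * c + b|)
          = (c * (s0 ^ 2 - 0 ^ 2) / 2 + b * (s0 - 0))
            + -(c * (t ^ 2 - s0 ^ 2) / 2 + b * (t - s0)) := by
        rw [← intervalIntegral.integral_add_adjacent_intervals
            (habs.intervalIntegrable 0 s0) (habs.intervalIntegrable s0 t),
          di_abs_lin_int 0 s0 c b hs0 (by simpa using hb) hzero.ge,
          di_abs_lin_int_neg s0 t c b hs0t hzero.le (by rw [mul_comm]; exact hctb.le)]
      have hb' : b = -(s0 * c) := by linarith
      have hlt : (c * (s0 ^ 2 - 0 ^ 2) / 2 + b * (s0 - 0))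
            + -(c * (t ^ 2 - s0 ^ 2) / 2 + b * (t - s0)) < t * K / 2 := by
        rw [hb']
        have hQ : (0:ℝ) ≤ 2 * s0 ^ 2 - 2 * s0 * t + t ^ 2 := by
          nlinarith [sq_nonneg (t - s0), sq_nonneg s0]
        have hA : (0:ℝ) ≤ (1 + c) * (2 * s0 ^ 2 - 2 * s0 * t + t ^ 2) :=
          mul_nonneg (by nlinarith [sq_nonneg (1 + c), sq_nonneg b]) hQ
        nlinarith [hA, mul_nonneg hs0 (sub_nonneg.2 hs0t), mul_pos ht (sub_pos.2 hKt)]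
      refine ⟨by rw [hI]; exact hlt.le, ?_, ?_⟩
      · intro h; rw [hI] at h; linarith
      · intro h; exfalso; nlinarith [mul_nonneg hb ht.le]
  · rcases le_or_gt (c * t + b) 0 with hctb | hctb
    · -- constant sign nonpos
      have hI : (∫ s in (0:ℝ)..t, |s * c + b|) = -(c * t ^ 2 / 2 + b * t) := by
        rw [di_abs_lin_int_neg 0 t c b ht.le (by simpa using hb.le) (by rw [mul_comm]; exact hctb)]
        ring
      have hX : 0 ≤ -(c * t ^ 2 / 2 + b * t) := by
        nlinarith [mul_nonpos_of_nonneg_of_nonpos ht.le hctb,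
          mul_nonpos_of_nonneg_of_nonpos ht.le hb.le]
      have e1 : t ^ 2 * (2 * c - b * t) ^ 2 / 4
          = (t * K / 2) ^ 2 - (c * t ^ 2 / 2 + b * t) ^ 2 := by
        linear_combination (t ^ 2 * (t ^ 2 + 4) / 4) * hcb - (t ^ 2 / 4) * hK2
      have hsq : (c * t ^ 2 / 2 + b * t) ^ 2 ≤ (t * K / 2) ^ 2 := by
        nlinarith [e1, sq_nonneg (t * (2 * c - b * t))]
      have hle : -(c * t ^ 2 / 2 + b * t) ≤ t * K / 2 := by
        nlinarith [hsq, hX, mul_pos ht hK0]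
      refine ⟨by rw [hI]; exact hle, ?_, ?_⟩
      · intro h
        rw [hI] at h
        have h4' : c * t ^ 2 / 2 + b * t = -(t * K / 2) := by linarith
        have h3 : t ^ 2 * (2 * c - b * t) ^ 2 = 0 := by
          have : t ^ 2 * (2 * c - b * t) ^ 2 / 4 = 0 := by rw [e1, h4']; ring
          linarith
        rcases mul_eq_zero.mp h3 with h4 | h4
        · exact absurd h4 (by positivity)
        · have := pow_eq_zero_iff (n := 2) (by norm_num) |>.mp h4
          linarith
      · intro h
        have h1 : (b * K) ^ 2 = 2 ^ 2 := by
          linear_combination b ^ 2 * hK2 - (2 * c + b * t) * h + 4 * hcb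
        have h2 : (b * K - 2) * (b * K + 2) = 0 := by linear_combination h1
        have hbK : b * K = -2 := by
          rcases mul_eq_zero.mp h2 with h4 | h4
          · nlinarith [mul_neg_of_neg_of_pos hb hK0]
          · linarith
        rw [hI]
        linear_combination (-(t ^ 2) / 4) * h - (t * K / 4) * hbK + (b * t / 4) * hK2
    · -- mixed: b < 0, c*t + b > 0, so c > 0
      have hcpos : 0 < c := by nlinarith
      obtain ⟨s0, hs0def⟩ : ∃ x : ℝ, x = (-b) / c := ⟨_, rfl⟩
      have hs0 : 0 ≤ s0 := by rw [hs0def]; exact div_nonneg (by linarith) hcpos.le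
      have hs0t : s0 ≤ t := by
        rw [hs0def, div_le_iff₀ hcpos]; nlinarith
      have hzero : s0 * c + b = 0 := by
        rw [hs0def, div_mul_cancel₀ (-b) (ne_of_gt hcpos)]; ring
      have hI : (∫ s in (0:ℝ)..t, |s * c + b|)
          = -(c * (s0 ^ 2 - 0 ^ 2) / 2 + b * (s0 - 0))
            + (c * (t ^ 2 - s0 ^ 2) / 2 + b * (t - s0)) := by
        rw [← intervalIntegral.integral_add_adjacent_intervals
            (habs.intervalIntegrable 0 s0) (habs.intervalIntegrable s0 t),
          di_abs_lin_int_neg 0 s0 c b hs0 (by simpa using hb.le) hzero.le,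
          di_abs_lin_int s0 t c b hs0t hzero.ge (by rw [mul_comm]; exact hctb.le)]
      have hb' : b = -(s0 * c) := by linarith
      have hlt : -(c * (s0 ^ 2 - 0 ^ 2) / 2 + b * (s0 - 0))
            + (c * (t ^ 2 - s0 ^ 2) / 2 + b * (t - s0)) < t * K / 2 := by
        rw [hb']
        have hQ : (0:ℝ) ≤ 2 * s0 ^ 2 - 2 * s0 * t + t ^ 2 := by
          nlinarith [sq_nonneg (t - s0), sq_nonneg s0]
        have hA : (0:ℝ) ≤ (1 - c) * (2 * s0 ^ 2 - 2 * s0 * t + t ^ 2) :=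
          mul_nonneg (by nlinarith [sq_nonneg (1 - c), sq_nonneg b]) hQ
        nlinarith [hA, mul_nonneg hs0 (sub_nonneg.2 hs0t), mul_pos ht (sub_pos.2 hKt)]
      refine ⟨by rw [hI]; exact hlt.le, ?_, ?_⟩
      · intro h; rw [hI] at h; linarith
      · intro h; exfalso; nlinarith [mul_neg_of_neg_of_pos hb ht]

lemma di_theta (t : ℝ) (ht : 0 < t) (θ : ℝ) (hθ : θ ∈ Set.Ico (0:ℝ) (2 * π)) :
    2 * Real.cos θ = Real.sin θ * t ↔
      θ = Real.arctan (2 / t) ∨ θ = π + Real.arctan (2 / t) := by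
  obtain ⟨K, hKdef⟩ : ∃ x : ℝ, x = Real.sqrt (t ^ 2 + 4) := ⟨_, rfl⟩
  have hK0 : 0 < K := hKdef ▸ Real.sqrt_pos.mpr (by positivity)
  have hK2 : K ^ 2 = t ^ 2 + 4 := hKdef ▸ Real.sq_sqrt (by positivity)
  set α := Real.arctan (2 / t) with hα
  have hα0 : 0 < α := by
    rw [hα, show (0:ℝ) = Real.arctan 0 by simp]
    exact Real.arctan_strictMono (by positivity)
  have hα2 : α < π / 2 := Real.arctan_lt_pi_div_two _
  have hsqrt : Real.sqrt (1 + (2 / t) ^ 2) = K / t := by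
    rw [show 1 + (2 / t) ^ 2 = (K / t) ^ 2 by rw [div_pow, div_pow, hK2]; field_simp; norm_num,
      Real.sqrt_sq (by positivity)]
  have hsin : Real.sin α = 2 / K := by
    rw [hα, Real.sin_arctan, hsqrt]
    rw [div_div_div_cancel_right₀]
    exact ht.ne'
  have hcos : Real.cos α = t / K := by
    rw [hα, Real.cos_arctan, hsqrt, one_div_div]
  have key : Real.sin (θ - α) = (Real.sin θ * t - 2 * Real.cos θ) / K := by
    rw [Real.sin_sub, hsin, hcos]
    field_simp
  have hπ := Real.pi_pos
  constructor
  · intro h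
    have hs0 : Real.sin (θ - α) = 0 := by rw [key, h]; ring
    obtain ⟨n, hn⟩ := Real.sin_eq_zero_iff.mp hs0
    have hn0 : (0:ℤ) ≤ n := by
      by_contra hc
      push_neg at hc
      have h1 : (n:ℝ) ≤ -1 := by exact_mod_cast (by omega : n ≤ -1)
      nlinarith [hθ.1]
    have hn1 : n ≤ 1 := by
      by_contra hc
      push_neg at hc
      have h1 : (2:ℝ) ≤ (n:ℝ) := by exact_mod_cast hc
      nlinarith [hθ.2]
    interval_cases n
    · left; norm_num at hn; linarith
    · right; norm_num at hn; linarith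
  · rintro (rfl | rfl)
    · rw [hsin, hcos]; field_simp
    · rw [show Real.cos (π + α) = -Real.cos α by rw [Real.cos_add]; simp,
        show Real.sin (π + α) = -Real.sin α by rw [Real.sin_add]; simp, hsin, hcos]
      field_simp

theorem double_integrator_width_max (μ t : ℝ) (hμ : 0 < μ) (ht : 0 < t)
    (w : ℝ → ℝ)
    (hw : ∀ θ, w θ = 2 * μ * ∫ s in (0:ℝ)..t, |s * Real.cos θ + Real.sin θ|) :
    Continuous w ∧
    (∀ θ, w θ ≤ μ * t * Real.sqrt (t ^ 2 + 4)) ∧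
    (∀ θ ∈ Set.Ico (0:ℝ) (2 * Real.pi),
      (w θ = μ * t * Real.sqrt (t ^ 2 + 4) ↔
        θ = Real.arctan (2 / t) ∨ θ = Real.pi + Real.arctan (2 / t))) := by
  refine ⟨?_, ?_, ?_⟩
  · have hwf : w = fun θ =>
        2 * μ * ∫ s in Set.Icc (0:ℝ) t, |s * Real.cos θ + Real.sin θ| := by
      funext θ
      rw [hw θ, intervalIntegral.integral_of_le ht.le, ← integral_Icc_eq_integral_Ioc]
    rw [hwf]
    refine continuous_const.mul ?_
    exact continuous_parametric_integral_of_continuous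
      (f := fun θ s => |s * Real.cos θ + Real.sin θ|) (by fun_prop) isCompact_Icc
  · intro θ
    have hk := (di_key t ht (Real.cos θ) (Real.sin θ) (Real.cos_sq_add_sin_sq θ)).1
    rw [hw θ]
    nlinarith [mul_le_mul_of_nonneg_left hk hμ.le]
  · intro θ hθ
    have hk := (di_key t ht (Real.cos θ) (Real.sin θ) (Real.cos_sq_add_sin_sq θ)).2
    rw [hw θ]
    constructor
    · intro h
      have h2 : μ * (2 * ∫ s in (0:ℝ)..t, |s * Real.cos θ + Real.sin θ|)
          = μ * (t * Real.sqrt (t ^ 2 + 4)) := by linarith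
      have h3 := mul_left_cancel₀ (ne_of_gt hμ) h2
      exact (di_theta t ht θ hθ).mp (hk.mp (by linarith))
    · intro h
      have h2 := hk.mpr ((di_theta t ht θ hθ).mpr h)
      rw [h2]
      ring
end
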